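/- Fix n ≥ 1 and define b_i = 2^{i−1} for 1 ≤ i ≤ n−1, and b_n = ∑_{0 ≤ j < n/2 − 1} 2^{2j} (sum over integers j with j < n/2 − 1). Then for any two subsets A_1, A_2 of {1,…,n} with |A_1| + |A_2| < n/2 and A_1 ≠ A_2, we have ∑_{i∈A_1} b_i ≠ ∑_{j∈A_2} b_j. -/

import Mathlib

open Finset

/-- popcount -/
def pc (n : ℕ) : ℕ := n.bitIndices.length

lemma pc_two_mul (m : ℕ) : pc (2 * m) = pc m := by simp [pc]

lemma pc_two_mul_add_one (m : ℕ) : pc (2 * m + 1) = pc m + 1 := by simp [pc]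

lemma pc4 (m : ℕ) : pc (4 * m) = pc m := by
  have : 4 * m = 2 * (2 * m) := by ring
  rw [this, pc_two_mul, pc_two_mul]

lemma pc4_1 (m : ℕ) : pc (4 * m + 1) = pc m + 1 := by
  have : 4 * m + 1 = 2 * (2 * m) + 1 := by ring
  rw [this, pc_two_mul_add_one, pc_two_mul]

lemma pc4_2 (m : ℕ) : pc (4 * m + 2) = pc m + 1 := by
  have : 4 * m + 2 = 2 * (2 * m + 1) := by ring
  rw [this, pc_two_mul, pc_two_mul_add_one]

lemma pc4_3 (m : ℕ) : pc (4 * m + 3) = pc m + 2 := by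
  have : 4 * m + 3 = 2 * (2 * m + 1) + 1 := by ring
  rw [this, pc_two_mul_add_one, pc_two_mul_add_one]

lemma pc_sum (X : Finset ℕ) : pc (∑ i ∈ X, 2 ^ i) = X.card := by
  rw [pc, ← List.toFinset_card_of_nodup Nat.bitIndices_sorted.nodup,
    Finset.toFinset_bitIndices_twoPowSum]

/-- the alternating-bits number -/
def NN (k : ℕ) : ℕ := ∑ j ∈ Finset.range k, 2 ^ (2 * j)

lemma NN_succ (k : ℕ) : NN (k + 1) = 4 * NN k + 1 := by
  unfold NN
  rw [Finset.sum_range_succ', Finset.mul_sum]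
  congr 1
  exact Finset.sum_congr rfl fun x _ => by ring

/-- key: NAF-weight minimality for NN -/
lemma key (k : ℕ) : ∀ s t : ℕ, (t = NN k + s → k ≤ pc t + pc s)
    ∧ (t = NN k + 1 + s → k ≤ pc t + pc s) := by
  induction k with
  | zero => intro s t; exact ⟨fun _ => Nat.zero_le _, fun _ => Nat.zero_le _⟩
  | succ k ih =>
    intro s t
    constructor
    · rintro rfl
      rw [NN_succ]
      obtain ⟨u, hu⟩ : ∃ u, s = 4 * u ∨ s = 4 * u + 1 ∨ s = 4 * u + 2 ∨ s = 4 * u + 3 :=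
        ⟨s / 4, by omega⟩
      rcases hu with rfl | rfl | rfl | rfl
      · have h : 4 * NN k + 1 + 4 * u = 4 * (NN k + u) + 1 := by ring
        rw [h, pc4_1, pc4]
        have := (ih u (NN k + u)).1 rfl
        omega
      · have h : 4 * NN k + 1 + (4 * u + 1) = 4 * (NN k + u) + 2 := by ring
        rw [h, pc4_2, pc4_1]
        have := (ih u (NN k + u)).1 rfl
        omega
      · have h : 4 * NN k + 1 + (4 * u + 2) = 4 * (NN k + u) + 3 := by ring
        rw [h, pc4_3, pc4_2]
        have := (ih u (NN k + u)).1 rfl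
        omega
      · have h : 4 * NN k + 1 + (4 * u + 3) = 4 * (NN k + 1 + u) := by ring
        rw [h, pc4, pc4_3]
        have := (ih u (NN k + 1 + u)).2 rfl
        omega
    · rintro rfl
      rw [NN_succ]
      obtain ⟨u, hu⟩ : ∃ u, s = 4 * u ∨ s = 4 * u + 1 ∨ s = 4 * u + 2 ∨ s = 4 * u + 3 :=
        ⟨s / 4, by omega⟩
      rcases hu with rfl | rfl | rfl | rfl
      · have h : 4 * NN k + 1 + 1 + 4 * u = 4 * (NN k + u) + 2 := by ring
        rw [h, pc4_2, pc4]
        have := (ih u (NN k + u)).1 rfl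
        omega
      · have h : 4 * NN k + 1 + 1 + (4 * u + 1) = 4 * (NN k + u) + 3 := by ring
        rw [h, pc4_3, pc4_1]
        have := (ih u (NN k + u)).1 rfl
        omega
      · have h : 4 * NN k + 1 + 1 + (4 * u + 2) = 4 * (NN k + 1 + u) := by ring
        rw [h, pc4, pc4_2]
        have := (ih u (NN k + 1 + u)).2 rfl
        omega
      · have h : 4 * NN k + 1 + 1 + (4 * u + 3) = 4 * (NN k + 1 + u) + 1 := by ring
        rw [h, pc4_1, pc4_3]
        have := (ih u (NN k + 1 + u)).2 rfl
        omega

lemma shift_inj {n : ℕ} {X : Finset ℕ} (hX : X ⊆ Finset.Icc 1 n) :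
    ∀ x ∈ X, ∀ y ∈ X, x - 1 = y - 1 → x = y := by
  intro x hx y hy hxy
  have h1 := Finset.mem_Icc.mp (hX hx)
  have h2 := Finset.mem_Icc.mp (hX hy)
  omega

lemma card_shift {n : ℕ} {X : Finset ℕ} (hX : X ⊆ Finset.Icc 1 n) :
    (X.image (· - 1)).card = X.card :=
  Finset.card_image_of_injOn (shift_inj hX)

lemma sum_shift {n : ℕ} {b : ℕ → ℕ} (hb1 : ∀ i, 1 ≤ i → i ≤ n - 1 → b i = 2 ^ (i - 1))
    {X : Finset ℕ} (hX : X ⊆ Finset.Icc 1 n) (hnX : n ∉ X) :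
    ∑ i ∈ X, b i = ∑ i ∈ X.image (· - 1), 2 ^ i := by
  rw [Finset.sum_image (shift_inj hX)]
  refine Finset.sum_congr rfl fun i hi => ?_
  have h1 := Finset.mem_Icc.mp (hX hi)
  have h2 : i ≠ n := fun h => hnX (h ▸ hi)
  exact hb1 i h1.1 (by omega)

lemma aux (n : ℕ) (hn : 1 ≤ n) (b : ℕ → ℕ)
    (hb1 : ∀ i, 1 ≤ i → i ≤ n - 1 → b i = 2 ^ (i - 1))
    (hbn : b n = ∑ j ∈ Finset.range ((n - 1) / 2), 2 ^ (2 * j))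
    (S T : Finset ℕ) (hS : S ⊆ Finset.Icc 1 n) (hT : T ⊆ Finset.Icc 1 n)
    (h2 : 2 * (S.card + T.card) < n) (hsum : ∑ i ∈ S, b i = ∑ i ∈ T, b i)
    (hnT : n ∉ T) : S = T := by
  by_cases hnS : n ∈ S
  · exfalso
    have hS' : S.erase n ⊆ Finset.Icc 1 n := (Finset.erase_subset _ _).trans hS
    have hnS' : n ∉ S.erase n := Finset.notMem_erase _ _
    have e1 : b n + ∑ i ∈ S.erase n, b i = ∑ i ∈ S, b i := Finset.add_sum_erase _ _ hnS
    have hts : ∑ i ∈ T.image (· - 1), 2 ^ i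
        = NN ((n - 1) / 2) + ∑ i ∈ (S.erase n).image (· - 1), 2 ^ i := by
      rw [← sum_shift hb1 hT hnT, ← sum_shift hb1 hS' hnS', ← hsum, ← e1, hbn]
      rfl
    have hk := (key ((n - 1) / 2) _ _).1 hts
    rw [pc_sum, pc_sum, card_shift hT, card_shift hS', Finset.card_erase_of_mem hnS] at hk
    have hScard : 1 ≤ S.card := Finset.card_pos.mpr ⟨n, hnS⟩
    omega
  · have himg : S.image (· - 1) = T.image (· - 1) := by
      apply Finset.geomSum_injective (le_refl 2)
      simp only
      rw [← sum_shift hb1 hS hnS, ← sum_shift hb1 hT hnT, hsum]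
    ext a
    constructor <;> intro ha
    · obtain ⟨x, hx, hxe⟩ := Finset.mem_image.mp (himg ▸ Finset.mem_image_of_mem (· - 1) ha)
      have h1 := Finset.mem_Icc.mp (hT hx)
      have h2 := Finset.mem_Icc.mp (hS ha)
      have : x = a := by omega
      exact this ▸ hx
    · obtain ⟨x, hx, hxe⟩ := Finset.mem_image.mp (himg ▸ Finset.mem_image_of_mem (· - 1) ha)
      have h1 := Finset.mem_Icc.mp (hS hx)
      have h2 := Finset.mem_Icc.mp (hT ha)
      have : x = a := by omega
      exact this ▸ hx

theorem stmt_7 (n : ℕ) (hn : 1 ≤ n) (b : ℕ → ℕ)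
    (hb1 : ∀ i, 1 ≤ i → i ≤ n - 1 → b i = 2 ^ (i - 1))
    (hbn : b n = ∑ j ∈ Finset.range ((n - 1) / 2), 2 ^ (2 * j))
    (A₁ A₂ : Finset ℕ) (h₁ : A₁ ⊆ Finset.Icc 1 n) (h₂ : A₂ ⊆ Finset.Icc 1 n)
    (hcard : ((A₁.card : ℝ) + (A₂.card : ℝ)) < (n : ℝ) / 2) (hne : A₁ ≠ A₂) :
    ∑ i ∈ A₁, b i ≠ ∑ j ∈ A₂, b j := by
  intro h
  have h2 : 2 * (A₁.card + A₂.card) < n := by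
    have h2' : ((2 * (A₁.card + A₂.card) : ℕ) : ℝ) < n := by push_cast; linarith
    exact_mod_cast h2'
  set S := A₁ \ A₂ with hSdef
  set T := A₂ \ A₁ with hTdef
  have hS : S ⊆ Finset.Icc 1 n := Finset.sdiff_subset.trans h₁
  have hT : T ⊆ Finset.Icc 1 n := Finset.sdiff_subset.trans h₂
  have hd : Disjoint S T := disjoint_sdiff_sdiff
  have hsum : ∑ i ∈ S, b i = ∑ i ∈ T, b i := by
    have e1 := Finset.sum_inter_add_sum_sdiff A₁ A₂ b
    have e2 := Finset.sum_inter_add_sum_sdiff A₂ A₁ b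
    rw [Finset.inter_comm] at e2
    rw [← hSdef] at e1
    rw [← hTdef] at e2
    omega
  have hcc : 2 * (S.card + T.card) < n := by
    have c1 := Finset.card_le_card (Finset.sdiff_subset : A₁ \ A₂ ⊆ A₁)
    have c2 := Finset.card_le_card (Finset.sdiff_subset : A₂ \ A₁ ⊆ A₂)
    rw [← hSdef] at c1
    rw [← hTdef] at c2
    omega
  have hST : S = T := by
    by_cases hnT : n ∈ T
    · have hnS : n ∉ S := fun h' => (Finset.disjoint_left.mp hd h') hnT
      exact (aux n hn b hb1 hbn T S hT hS (by omega) hsum.symm hnS).symm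
    · exact aux n hn b hb1 hbn S T hS hT hcc hsum hnT
  have hSe : S = ∅ := by have := disjoint_self.mp (hST.symm ▸ hd : Disjoint S S); exact this
  have hTe : T = ∅ := hST ▸ hSe
  exact hne (Finset.Subset.antisymm
    (Finset.sdiff_eq_empty_iff_subset.mp hSe)
    (Finset.sdiff_eq_empty_iff_subset.mp hTe))
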